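/- (Fixed-point equation for the limiting storage distribution.) Assume in addition that G is continuous and that the laws μ_n of Z_n converge weakly, as n → ∞, to a probability measure μ on [0, C_1 − c_0] with cumulative distribution function F(z) = μ([0, z]). Then for every z ∈ [0, C_1 − c_0) that is a continuity point of F, F(z) = ∫_{[0, C_1−c_0]} G(c_0 + z − x) dμ(x). -/

import Mathlib

open scoped BigOperators
open MeasureTheory ProbabilityTheory Filter

noncomputable def moranPhi (c0 C1 : ℝ) : ℕ → ℝ × (ℕ → ℝ) → ℝ
  | 0, p => p.1
  | n+1, p => min (max (moranPhi c0 C1 n p + p.2 n - c0) 0) (C1 - c0)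

lemma moranPhi_measurable (c0 C1 : ℝ) (n : ℕ) : Measurable (moranPhi c0 C1 n) := by
  induction n with
  | zero => exact measurable_fst
  | succ n ih =>
    exact (((ih.add ((measurable_pi_apply n).comp measurable_snd)).sub
      measurable_const).max measurable_const).min measurable_const

lemma moranPhi_local (c0 C1 : ℝ) (n : ℕ) (x : ℝ) (y y' : ℕ → ℝ)
    (h : ∀ i < n, y i = y' i) : moranPhi c0 C1 n (x, y) = moranPhi c0 C1 n (x, y') := by
  induction n with
  | zero => rfl
  | succ n ih =>
    simp only [moranPhi, ih (fun i hi => h i (Nat.lt_succ_of_lt hi)),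
      h n (Nat.lt_succ_self n)]

lemma moran_Zrep {Ω : Type} [MeasurableSpace Ω] (c0 C1 : ℝ) (Y Z : ℕ → Ω → ℝ)
    (hrec : ∀ n ω, Z (n + 1) ω = min (max (Z n ω + Y n ω - c0) 0) (C1 - c0))
    (n : ℕ) (ω : Ω) : Z n ω = moranPhi c0 C1 n (Z 0 ω, fun i => Y i ω) := by
  induction n with
  | zero => rfl
  | succ n ih => simp only [moranPhi, hrec, ih]

lemma moran_indep {Ω : Type} [MeasurableSpace Ω] (μ : Measure Ω)
    (c0 C1 : ℝ) (Y Z : ℕ → Ω → ℝ)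
    (hYmeas : ∀ n, Measurable (Y n)) (hZ0meas : Measurable (Z 0))
    (hIndep : iIndepFun
      (fun i : Option ℕ => i.elim (Z 0) Y) μ)
    (hrec : ∀ n ω, Z (n + 1) ω = min (max (Z n ω + Y n ω - c0) 0) (C1 - c0))
    (n : ℕ) : IndepFun (Z n) (Y n) μ := by
  classical
  set f : Option ℕ → Ω → ℝ := fun i => i.elim (Z 0) Y with hf
  have hmeasf : ∀ i, Measurable (f i) := by
    intro i; cases i with
    | none => exact hZ0meas
    | some i => exact hYmeas i
  set S : Finset (Option ℕ) := insert none ((Finset.range n).image some) with hS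
  set T : Finset (Option ℕ) := {some n} with hT
  have hnoneS : none ∈ S := Finset.mem_insert_self _ _
  have hsomeS : ∀ i, i < n → some i ∈ S := by
    intro i hi
    exact Finset.mem_insert_of_mem (Finset.mem_image_of_mem _ (Finset.mem_range.2 hi))
  have hST : Disjoint S T := by
    simp [hS, hT, Finset.disjoint_singleton_right]
  have h := hIndep.indepFun_finset S T hST hmeasf
  set gS : (↥S → ℝ) → ℝ := fun v =>
    moranPhi c0 C1 n (v ⟨none, hnoneS⟩,
      fun i => if h : (some i) ∈ S then v ⟨some i, h⟩ else 0) with hgSdef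
  have hgS : Measurable gS := by
    apply (moranPhi_measurable c0 C1 n).comp
    refine (measurable_pi_apply _).prodMk (measurable_pi_lambda _ fun i => ?_)
    by_cases hi : (some i) ∈ S
    · simp only [dif_pos hi]; exact measurable_pi_apply _
    · simp only [dif_neg hi]; exact measurable_const
  set gT : (↥T → ℝ) → ℝ := fun v => v ⟨some n, Finset.mem_singleton_self _⟩
    with hgTdef
  have hgT : Measurable gT := measurable_pi_apply _
  have key := h.comp hgS hgT
  have h1 : gS ∘ (fun a (i : S) => f i a) = Z n := by
    funext a
    simp only [Function.comp_apply, hgSdef]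
    rw [moran_Zrep c0 C1 Y Z hrec n a]
    exact (moranPhi_local c0 C1 n _ _ _ (fun i hi => by simp [dif_pos (hsomeS i hi), hf])).symm
  have h2 : gT ∘ (fun a (i : T) => f i a) = Y n := by
    funext a; rfl
  rwa [h1, h2] at key
theorem stmt15
    (c0 C1 : ℝ) (hc0 : 0 < c0) (hcC : c0 < C1)
    {Ω : Type} [MeasurableSpace Ω] (μ : Measure Ω) [IsProbabilityMeasure μ]
    (Y Z : ℕ → Ω → ℝ)
    (hYmeas : ∀ n, Measurable (Y n)) (hZ0meas : Measurable (Z 0))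
    (hYnn : ∀ n ω, 0 ≤ Y n ω)
    (hYid : ∀ n, Measure.map (Y n) μ = Measure.map (Y 0) μ)
    (G : ℝ → ℝ) (hG : ∀ y, G y = (μ {ω | Y 0 ω ≤ y}).toReal)
    (hIndep : iIndepFun
      (fun i : Option ℕ => i.elim (Z 0) Y) μ)
    (hZ0mem : ∀ ω, Z 0 ω ∈ Set.Icc 0 (C1 - c0))
    (hrec : ∀ n ω, Z (n + 1) ω = min (max (Z n ω + Y n ω - c0) 0) (C1 - c0))
    (hGcont : Continuous G)
    (ν : Measure ℝ) [IsProbabilityMeasure ν] (hνsupp : ν (Set.Icc 0 (C1 - c0)) = 1)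
    (hweak : ∀ f : BoundedContinuousFunction ℝ ℝ,
      Tendsto (fun n => ∫ x, f x ∂(Measure.map (Z n) μ)) atTop (nhds (∫ x, f x ∂ν)))
    (F : ℝ → ℝ) (hF : ∀ z, F z = (ν (Set.Icc 0 z)).toReal) :
    ∀ z ∈ Set.Ico (0 : ℝ) (C1 - c0), ContinuousAt F z →
      F z = ∫ x in Set.Icc (0 : ℝ) (C1 - c0), G (c0 + z - x) ∂ν := by
  intro z hz hcont
  obtain ⟨hz0, hzlt⟩ := hz
  have hZmeas : ∀ n, Measurable (Z n) := by
    intro n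
    have : Z n = fun ω => moranPhi c0 C1 n (Z 0 ω, fun i => Y i ω) :=
      funext (moran_Zrep c0 C1 Y Z hrec n)
    rw [this]
    exact (moranPhi_measurable c0 C1 n).comp
      (hZ0meas.prodMk (measurable_pi_lambda _ hYmeas))
  have hindep : ∀ n, IndepFun (Z n) (Y n) μ :=
    moran_indep μ c0 C1 Y Z hYmeas hZ0meas hIndep hrec
  have hG01 : ∀ t, 0 ≤ G t ∧ G t ≤ 1 := by
    intro t
    rw [hG]
    refine ⟨ENNReal.toReal_nonneg, ?_⟩
    have h1 : (μ {ω | Y 0 ω ≤ t}).toReal ≤ (1 : ENNReal).toReal :=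
      ENNReal.toReal_mono ENNReal.one_ne_top prob_le_one
    simpa using h1
  -- prelimit set identity
  have hset : ∀ n, {ω | Z (n+1) ω ≤ z} = {ω | Z n ω + Y n ω ≤ c0 + z} := by
    intro n; ext ω
    simp only [Set.mem_setOf_eq, hrec, min_le_iff, max_le_iff]
    constructor
    · rintro (⟨h1, -⟩ | h2)
      · linarith
      · linarith
    · intro h; exact Or.inl ⟨by linarith, hz0⟩
  have hmapY : ∀ (n : ℕ) (t : ℝ),
      Measure.map (Y n) μ (Set.Iic t) = ENNReal.ofReal (G t) := by
    intro n t
    rw [hYid n, Measure.map_apply (hYmeas 0) measurableSet_Iic, hG,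
      ENNReal.ofReal_toReal (measure_ne_top μ _)]
    rfl
  -- the prelimit identity
  have hpre : ∀ n, (μ {ω | Z (n+1) ω ≤ z}).toReal
      = ∫ x, G (c0 + z - x) ∂(Measure.map (Z n) μ) := by
    intro n
    have hprod : μ.map (fun ω => (Z n ω, Y n ω)) = (μ.map (Z n)).prod (μ.map (Y n)) :=
      (indepFun_iff_map_prod_eq_prod_map_map (hZmeas n).aemeasurable
        (hYmeas n).aemeasurable).mp (hindep n)
    have hsm : MeasurableSet {p : ℝ × ℝ | p.1 + p.2 ≤ c0 + z} :=
      measurableSet_le (measurable_fst.add measurable_snd) measurable_const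
    have h1 : μ {ω | Z (n+1) ω ≤ z}
        = ∫⁻ x, ENNReal.ofReal (G (c0 + z - x)) ∂(μ.map (Z n)) := by
      rw [hset n]
      have hpe : {ω | Z n ω + Y n ω ≤ c0 + z}
          = (fun ω => (Z n ω, Y n ω)) ⁻¹' {p : ℝ × ℝ | p.1 + p.2 ≤ c0 + z} := rfl
      rw [hpe, ← Measure.map_apply ((hZmeas n).prodMk (hYmeas n)) hsm, hprod,
        Measure.prod_apply hsm]
      refine lintegral_congr fun x => ?_
      have hx : Prod.mk x ⁻¹' {p : ℝ × ℝ | p.1 + p.2 ≤ c0 + z}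
          = Set.Iic (c0 + z - x) := by
        ext y
        simp only [Set.mem_preimage, Set.mem_setOf_eq, Set.mem_Iic]
        constructor <;> intro <;> linarith
      rw [hx, hmapY n]
    have hmeasG : AEMeasurable (fun x => ENNReal.ofReal (G (c0 + z - x))) (μ.map (Z n)) :=
      (ENNReal.measurable_ofReal.comp
        (hGcont.measurable.comp ((measurable_const.sub measurable_id)))).aemeasurable
    rw [h1, ← integral_toReal hmeasG (ae_of_all _ fun x => ENNReal.ofReal_lt_top)]
    exact integral_congr_ae (ae_of_all _ fun x => ENNReal.toReal_ofReal (hG01 _).1)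
  -- ν has no atom at z
  have hνz : ν {z} = 0 := by
    set w : ℕ → ℝ := fun k => z - 1 / (k + 1) with hw
    have hwlt : ∀ k : ℕ, w k < z := by
      intro k; simp only [hw]; have : (0:ℝ) < 1 / (k+1) := by positivity
      linarith
    have hwmono : Monotone fun k : ℕ => Set.Icc (0:ℝ) (w k) := by
      intro k l hkl
      refine Set.Icc_subset_Icc_right ?_
      have : (1:ℝ) / (l+1) ≤ 1 / (k+1) := by
        apply one_div_le_one_div_of_le (by positivity)
        exact_mod_cast Nat.succ_le_succ hkl
      simp only [hw]; linarith
    have hUnion : (⋃ k : ℕ, Set.Icc (0:ℝ) (w k)) = Set.Ico 0 z := by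
      ext x
      simp only [Set.mem_iUnion, Set.mem_Icc, Set.mem_Ico]
      constructor
      · rintro ⟨k, hx0, hxk⟩
        exact ⟨hx0, lt_of_le_of_lt hxk (hwlt k)⟩
      · rintro ⟨hx0, hxz⟩
        obtain ⟨k, hk⟩ := exists_nat_one_div_lt (show (0:ℝ) < z - x by linarith)
        exact ⟨k, hx0, by simp only [hw]; linarith⟩
    have h1 : Tendsto (fun k => ν (Set.Icc 0 (w k))) atTop (nhds (ν (Set.Ico 0 z))) := by
      rw [← hUnion]
      exact tendsto_measure_iUnion_atTop hwmono
    have h3 : Tendsto (fun k => F (w k)) atTop (nhds ((ν (Set.Ico 0 z)).toReal)) := by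
      have := (ENNReal.tendsto_toReal (measure_ne_top ν _)).comp h1
      refine Tendsto.congr (fun k => ?_) this
      simp only [Function.comp_apply, hF]
    have hwz : Tendsto w atTop (nhds z) := by
      have : Tendsto (fun k : ℕ => (1:ℝ) / (k + 1)) atTop (nhds 0) :=
        tendsto_one_div_add_atTop_nhds_zero_nat
      have := tendsto_const_nhds.sub this (f := fun _ : ℕ => z)
      simpa only [hw, one_div, sub_zero] using this
    have h2 : Tendsto (fun k => F (w k)) atTop (nhds (F z)) :=
      (hcont.tendsto).comp hwz
    have hFz : F z = (ν (Set.Ico 0 z)).toReal := tendsto_nhds_unique h2 h3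
    have heq : ν (Set.Icc 0 z) = ν (Set.Ico 0 z) := by
      have := hFz; rw [hF] at this
      exact (ENNReal.toReal_eq_toReal_iff' (measure_ne_top _ _) (measure_ne_top _ _)).mp this
    have hsplit : ν (Set.Icc 0 z) = ν (Set.Ico 0 z) + ν {z} := by
      rw [← measure_union (by simp [Set.disjoint_singleton_right])
        (measurableSet_singleton z)]
      congr 1
      rw [Set.Ico_union_right hz0]
    rw [heq] at hsplit
    nth_rewrite 1 [← add_zero (ν (Set.Ico 0 z))] at hsplit
    exact ((ENNReal.add_right_inj (measure_ne_top ν _)).mp hsplit).symm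
  have hcompl : ν (Set.Icc 0 (C1 - c0))ᶜ = 0 := by
    rw [measure_compl measurableSet_Icc (measure_ne_top _ _), hνsupp, measure_univ, tsub_self]
  have hIio : ν (Set.Iio 0) = 0 := by
    refine measure_mono_null ?_ hcompl
    intro x hx
    simp only [Set.mem_compl_iff, Set.mem_Icc, not_and_or, not_le]
    exact Or.inl (by exact hx)
  have hIic : ν (Set.Iic z) = ν (Set.Icc 0 z) := by
    have hsub : Set.Iic z ⊆ Set.Iio 0 ∪ Set.Icc 0 z := by
      intro x hx
      rcases lt_or_ge x 0 with h | h
      · exact Or.inl h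
      · exact Or.inr ⟨h, hx⟩
    refine le_antisymm ?_ (measure_mono fun x hx => hx.2)
    calc ν (Set.Iic z) ≤ ν (Set.Iio 0 ∪ Set.Icc 0 z) := measure_mono hsub
      _ ≤ ν (Set.Iio 0) + ν (Set.Icc 0 z) := measure_union_le _ _
      _ = ν (Set.Icc 0 z) := by rw [hIio, zero_add]
  -- weak convergence via ProbabilityMeasure
  have hPMn : ∀ n, IsProbabilityMeasure (Measure.map (Z n) μ) := fun n =>
    Measure.isProbabilityMeasure_map (hZmeas n).aemeasurable
  set P : ℕ → ProbabilityMeasure ℝ := fun n => ⟨Measure.map (Z n) μ, hPMn n⟩ with hP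
  set Pν : ProbabilityMeasure ℝ := ⟨ν, inferInstance⟩ with hPν
  have hPtend : Tendsto P atTop (nhds Pν) := by
    rw [ProbabilityMeasure.tendsto_iff_forall_integral_tendsto]
    intro f
    exact hweak f
  have hE := ProbabilityMeasure.tendsto_measure_of_null_frontier_of_tendsto'
    hPtend (E := Set.Iic z) (by rw [frontier_Iic]; exact hνz)
  have hLHS : Tendsto (fun n => (Measure.map (Z n) μ (Set.Iic z)).toReal) atTop
      (nhds (F z)) := by
    have := (ENNReal.tendsto_toReal
      (show (Pν : Measure ℝ) (Set.Iic z) ≠ ⊤ from measure_ne_top _ _)).comp hE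
    have hFz : F z = ((Pν : Measure ℝ) (Set.Iic z)).toReal := by
      rw [hF]
      show (ν (Set.Icc 0 z)).toReal = (ν (Set.Iic z)).toReal
      rw [hIic]
    rw [hFz]
    exact this
  -- bounded continuous test function
  set fb : BoundedContinuousFunction ℝ ℝ :=
    BoundedContinuousFunction.mkOfBound
      ⟨fun x => G (c0 + z - x), hGcont.comp (continuous_const.sub continuous_id)⟩ 1
      (fun x y => by
        have hx := hG01 (c0 + z - x); have hy := hG01 (c0 + z - y)
        rw [Real.dist_eq, abs_le]
        constructor <;> simp only [ContinuousMap.coe_mk] <;> linarith [hx.1, hx.2, hy.1, hy.2])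
    with hfb
  have hA : Tendsto (fun n => ∫ x, G (c0 + z - x) ∂(Measure.map (Z n) μ)) atTop
      (nhds (F z)) := by
    have hshift := hLHS.comp (tendsto_add_atTop_nat 1)
    refine hshift.congr fun n => ?_
    show (Measure.map (Z (n+1)) μ (Set.Iic z)).toReal = _
    rw [Measure.map_apply (hZmeas (n+1)) measurableSet_Iic]
    exact hpre n
  have hB := hweak fb
  have hfbcoe : ∀ x, fb x = G (c0 + z - x) := fun x => rfl
  have hfinal : F z = ∫ x, G (c0 + z - x) ∂ν := by
    refine tendsto_nhds_unique hA ?_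
    simpa only [hfbcoe] using hB
  have hres : ν.restrict (Set.Icc 0 (C1 - c0)) = ν :=
    Measure.restrict_eq_self_of_ae_mem (by
      rw [ae_iff]
      have hset2 : {a : ℝ | ¬ a ∈ Set.Icc 0 (C1 - c0)} = (Set.Icc 0 (C1 - c0))ᶜ := rfl
      rw [hset2]
      exact hcompl)
  rw [hfinal]
  conv_lhs => rw [← hres]
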